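/- arXiv:1407.5396 — 5 statements merged into one kernel-verified Lean document; each statement's English description precedes it below -/
import Mathlib

section
/- For pseudo-elements (x, α) and (y, β), one has ↕(x, α) ⊆ ↕(y, β) if and only if x ⪯ y and for every b ∈ β, b ⊓ x ∈ ↓α. -/
def dc {S : Type*} [Preorder S] (L : Set S) : Set S := {s | ∃ a ∈ L, s ≤ a}

def pc {S : Type*} [Preorder S] (x : S) (α : Set S) : Set S := dc {x} \ dc α

theorem stmt_6 {S : Type*} [SemilatticeInf S] (x y : S) (α β : Set S)
    (hα : IsAntichain (· ≤ ·) α) (hx : x ∉ dc α)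
    (hβ : IsAntichain (· ≤ ·) β) (hy : y ∉ dc β) :
    pc x α ⊆ pc y β ↔ x ≤ y ∧ ∀ b ∈ β, b ⊓ x ∈ dc α := by
  constructor
  · intro h
    have hxm : x ∈ pc y β := h ⟨⟨x, rfl, le_rfl⟩, hx⟩
    have hxy : x ≤ y := by
      obtain ⟨⟨y', hy', h1⟩, -⟩ := hxm
      rw [Set.mem_singleton_iff] at hy'; exact hy' ▸ h1
    refine ⟨hxy, fun b hb => ?_⟩
    by_contra hbc
    have : b ⊓ x ∈ pc y β := h ⟨⟨x, rfl, inf_le_right⟩, hbc⟩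
    exact this.2 ⟨b, hb, inf_le_left⟩
  · rintro ⟨hxy, hb⟩ s ⟨⟨x', hx', hsx⟩, hsα⟩
    rw [Set.mem_singleton_iff] at hx'
    rw [hx'] at hsx
    refine ⟨⟨y, rfl, hsx.trans hxy⟩, fun ⟨b, hbβ, hsb⟩ => ?_⟩
    obtain ⟨a, ha, hba⟩ := hb b hbβ
    exact hsα ⟨a, ha, (le_inf hsb hsx).trans hba⟩
end

section
/- If (x, α) and (y, β) are pseudo-elements in canonical form and ↕(x, α) = ↕(y, β), then x = y and α = β. -/
lemma mem_pc_self {S : Type*} [Preorder S] {x : S} {α : Set S} (hx : x ∉ dc α) :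
    x ∈ pc x α := ⟨⟨x, rfl, le_refl x⟩, hx⟩

lemma subset_of_pc_eq {S : Type*} [SemilatticeInf S] {x y : S} {α β : Set S}
    (hα : IsAntichain (· ≤ ·) α) (hcanα : ∀ a ∈ α, a ≤ x)
    (hβ : IsAntichain (· ≤ ·) β) (hcanβ : ∀ b ∈ β, b ≤ y)
    (heq : pc x α = pc y β) (hxy : x = y) : α ⊆ β := by
  intro a ha
  have hax := hcanα a ha
  have hadcα : a ∈ dc α := ⟨a, ha, le_refl a⟩
  have : a ∉ pc x α := fun h => h.2 hadcα
  rw [heq] at this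
  have hadcβ : a ∈ dc β := by
    by_contra hc
    exact this ⟨⟨y, rfl, hxy ▸ hax⟩, hc⟩
  obtain ⟨b, hb, hab⟩ := hadcβ
  -- b ∉ pc y β, and b ≤ y, so b ∈ dc α via heq
  have hbdcβ : b ∈ dc β := ⟨b, hb, le_refl b⟩
  have hbn : b ∉ pc x α := by rw [heq]; exact fun h => h.2 hbdcβ
  have hbdcα : b ∈ dc α := by
    by_contra hc
    exact hbn ⟨⟨x, rfl, hxy ▸ hcanβ b hb⟩, hc⟩
  obtain ⟨a', ha', hba'⟩ := hbdcα
  have haa' : a = a' := by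
    by_contra hne
    exact hα ha ha' hne (hab.trans hba')
  have hab2 : a = b := le_antisymm hab (haa' ▸ hba')
  exact hab2 ▸ hb

theorem stmt_7 {S : Type*} [SemilatticeInf S] (x y : S) (α β : Set S)
    (hα : IsAntichain (· ≤ ·) α) (hx : x ∉ dc α) (hcanα : ∀ a ∈ α, a ≤ x)
    (hβ : IsAntichain (· ≤ ·) β) (hy : y ∉ dc β) (hcanβ : ∀ b ∈ β, b ≤ y)
    (heq : pc x α = pc y β) :
    x = y ∧ α = β := by
  have hxy : x = y := by
    have h1 : x ∈ pc y β := heq ▸ mem_pc_self hx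
    have h2 : y ∈ pc x α := heq.symm ▸ mem_pc_self hy
    obtain ⟨⟨_, rfl, hxy⟩, -⟩ := h1
    obtain ⟨⟨_, rfl, hyx⟩, -⟩ := h2
    exact le_antisymm hxy hyx
  refine ⟨hxy, Set.Subset.antisymm ?_ ?_⟩
  · exact subset_of_pc_eq hα hcanα hβ hcanβ heq hxy
  · exact subset_of_pc_eq hβ hcanβ hα hcanα heq.symm hxy.symm
end

section
/- For any pseudo-element (x, α), the pseudo-element (x, ⌈↓{x} ∩ ↓α⌉) is in canonical form and has the same pseudo-closure as (x, α). -/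
def maxElems {S : Type*} [Preorder S] (L : Set S) : Set S :=
  {a ∈ L | ∀ b ∈ L, a ≤ b → b ≤ a}

theorem stmt_8 {S : Type*} [SemilatticeInf S] [Fintype S] (x : S) (α : Set S)
    (hα : IsAntichain (· ≤ ·) α) (hx : x ∉ dc α) :
    (∀ a ∈ maxElems (dc {x} ∩ dc α), a ≤ x) ∧
    pc x (maxElems (dc {x} ∩ dc α)) = pc x α := by
  constructor
  · rintro a ⟨⟨⟨y, hy, hle⟩, -⟩, -⟩
    simp only [Set.mem_singleton_iff] at hy
    exact hy ▸ hle
  · ext s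
    simp only [pc, Set.mem_diff]
    refine and_congr_right fun hs => not_congr ⟨?_, ?_⟩
    · rintro ⟨a, ⟨⟨-, ha⟩, -⟩, hsa⟩
      obtain ⟨b, hb, hab⟩ := ha
      exact ⟨b, hb, hsa.trans hab⟩
    · rintro ⟨a, ha, hsa⟩
      have hsM : s ∈ dc {x} ∩ dc α := ⟨hs, a, ha, hsa⟩
      have hfin : ({t ∈ dc {x} ∩ dc α | s ≤ t} : Set S).Finite := Set.toFinite _
      obtain ⟨m, hm, hmax⟩ := hfin.exists_maximalFor id _ ⟨s, hsM, le_refl s⟩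
      refine ⟨m, ⟨hm.1, fun b hb hmb => ?_⟩, hm.2⟩
      exact (hmax ⟨hb, hm.2.trans hmb⟩ hmb).ge
end

section
/- For pseudo-elements (x, α) and (y, β), the set difference of their pseudo-closures satisfies ↕(x, α) \ ↕(y, β) = (↓{x} \ (↓{y} ∪ ↓α)) ∪ ⋃_{b ∈ β} (↓{x ⊓ b} \ ↓α). -/
theorem stmt_10 {S : Type*} [SemilatticeInf S] (x y : S) (α β : Set S)
    (hα : IsAntichain (· ≤ ·) α) (hx : x ∉ dc α)
    (hβ : IsAntichain (· ≤ ·) β) (hy : y ∉ dc β) :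
    pc x α \ pc y β =
      (dc {x} \ (dc {y} ∪ dc α)) ∪ ⋃ b ∈ β, (dc {x ⊓ b} \ dc α) := by
  ext s
  simp only [pc, dc, Set.mem_diff, Set.mem_setOf_eq, Set.mem_singleton_iff,
    Set.mem_union, Set.mem_iUnion, exists_exists_and_eq_and, exists_eq_left,
    le_inf_iff, not_and, not_exists, not_forall, not_not]
  constructor
  · rintro ⟨⟨hsx, hsα⟩, h⟩
    rcases Classical.em (s ≤ y) with hsy | hsy
    · obtain ⟨b, hb, hsb⟩ := h hsy
      exact Or.inr ⟨b, hb, ⟨hsx, hsb⟩, hsα⟩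
    · exact Or.inl ⟨hsx, fun h' => h'.elim hsy (fun ⟨a, ha, hsa⟩ => hsα a ha hsa)⟩
  · rintro (⟨hsx, hns⟩ | ⟨b, hb, ⟨hsx, hsb⟩, hsα⟩)
    · exact ⟨⟨hsx, fun a ha hsa => hns (Or.inr ⟨a, ha, hsa⟩)⟩,
        fun h => (hns (Or.inl h)).elim⟩
    · exact ⟨⟨hsx, hsα⟩, fun _ => ⟨b, hb, hsb⟩⟩
end

section
/- For a pseudo-element (x, α) in a monotonic MDP, the predecessor of its pseudo-closure decomposes as Pre_{σ,τ}(↕(x, α)) = ⋃_{x' ∈ ⌈Pre_{σ,τ}(↓{x})⌉} ↕(x', ⌈Pre_{σ,τ}(↓α)⌉), where each (x', ⌈Pre_{σ,τ}(↓α)⌉) is understood via its pseudo-closure ↓{x'} \ ↓⌈Pre_{σ,τ}(↓α)⌉. -/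
def Pre {S A T : Type*} (E : S → A → Option (T → S)) (σ : A) (τ : T) (L : Set S) : Set S :=
  {s | ∃ f, E s σ = some f ∧ f τ ∈ L}

lemma pre_diff {S A T : Type*} (E : S → A → Option (T → S)) (σ : A) (τ : T) (L M : Set S) :
    Pre E σ τ (L \ M) = Pre E σ τ L \ Pre E σ τ M := by
  ext s
  constructor
  · rintro ⟨f, hf, hfL, hfM⟩
    refine ⟨⟨f, hf, hfL⟩, fun hm => hfM ?_⟩
    obtain ⟨g, hg, hgM⟩ := hm
    cases Option.some.inj (hf.symm.trans hg)
    exact hgM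
  · rintro ⟨⟨f, hf, hfL⟩, hM⟩
    exact ⟨f, hf, hfL, fun hfM => hM ⟨f, hf, hfM⟩⟩

lemma dc_maxElems {S : Type*} [PartialOrder S] [Finite S] (L : Set S) :
    dc (maxElems L) = dc L := by
  ext s
  constructor
  · rintro ⟨a, ha, hsa⟩; exact ⟨a, ha.1, hsa⟩
  · rintro ⟨a, ha, hsa⟩
    obtain ⟨b, hab, hb⟩ := Finite.exists_le_maximal (p := (· ∈ L)) ha
    exact ⟨b, ⟨hb.1, fun c hc hbc => hb.2 hc hbc⟩, hsa.trans hab⟩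

lemma dc_pre {S A T : Type*} [Preorder S] (E : S → A → Option (T → S))
    (hcompat : ∀ s s' : S, s ≤ s' → ∀ σ : A, ∀ f' : T → S, E s' σ = some f' →
      ∃ f : T → S, E s σ = some f ∧ ∀ τ : T, f τ ≤ f' τ)
    (σ : A) (τ : T) (L : Set S) :
    dc (Pre E σ τ (dc L)) = Pre E σ τ (dc L) := by
  ext s
  constructor
  · rintro ⟨s', ⟨f', hf', a, ha, hle⟩, hss'⟩
    obtain ⟨f, hf, hff'⟩ := hcompat s s' hss' σ f' hf'
    exact ⟨f, hf, a, ha, (hff' τ).trans hle⟩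
  · intro h; exact ⟨s, h, le_refl s⟩

theorem stmt_16 {S A T : Type*} [SemilatticeInf S] [Fintype S]
    (E : S → A → Option (T → S))
    (hcompat : ∀ s s' : S, s ≤ s' → ∀ σ : A, ∀ f' : T → S, E s' σ = some f' →
      ∃ f : T → S, E s σ = some f ∧ ∀ τ : T, f τ ≤ f' τ)
    (x : S) (α : Set S) (hα : IsAntichain (· ≤ ·) α) (hx : x ∉ dc α)
    (σ : A) (τ : T) :
    Pre E σ τ (pc x α) =
      ⋃ x' ∈ maxElems (Pre E σ τ (dc {x})),
        (dc {x'} \ dc (maxElems (Pre E σ τ (dc α)))) := by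
  have key : ∀ s, s ∈ dc (maxElems (Pre E σ τ (dc {x}))) ↔
      ∃ x' ∈ maxElems (Pre E σ τ (dc {x})), s ∈ dc {x'} := by
    intro s
    constructor
    · rintro ⟨a, ha, hsa⟩; exact ⟨a, ha, a, Set.mem_singleton a, hsa⟩
    · rintro ⟨a, ha, b, hb, hsb⟩
      cases hb
      exact ⟨a, ha, hsb⟩
  ext s
  rw [Set.mem_iUnion₂]
  simp only [Set.mem_diff]
  rw [pc, pre_diff]
  constructor
  · rintro ⟨h1, h2⟩
    have : s ∈ dc (maxElems (Pre E σ τ (dc {x}))) := by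
      rw [dc_maxElems, dc_pre E hcompat]; exact h1
    obtain ⟨x', hx', hsx'⟩ := (key s).1 this
    refine ⟨x', hx', hsx', fun hc => h2 ?_⟩
    rw [dc_maxElems, dc_pre E hcompat] at hc; exact hc
  · rintro ⟨x', hx', hsx', hns⟩
    have h1 : s ∈ Pre E σ τ (dc {x}) := by
      rw [← dc_pre E hcompat, ← dc_maxElems]
      exact (key s).2 ⟨x', hx', hsx'⟩
    refine ⟨h1, fun hc => hns ?_⟩
    rw [dc_maxElems, dc_pre E hcompat]; exact hc
end
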